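/- 2D Cui–Ding–Wu cell average decomposition for polynomials of degree at most 3: let {x^μ, ω_μ}_{μ=1}^Q be the Q-point Gauss–Legendre nodes and normalized weights on [−1,1] with Q = 4. Let λ₁, λ₂ ≥ 0 with λ := λ₁ + λ₂ > 0, set δ := (λ₁ − λ₂)/λ, ω̄ := 1/(4 + 2|δ|), ω̃ := (1+|δ|)/(2(2+|δ|)), and define the two internal nodes P₁, P₂ ∈ [−1,1]² by P₁ = (√(2|δ|/(3+3|δ|)), 0), P₂ = (−√(2|δ|/(3+3|δ|)), 0) if δ ≤ 0, and P₁ = (0, √(2δ/(3+3δ))), P₂ = (0, −√(2δ/(3+3δ))) if δ ≥ 0. Then for every real bivariate polynomial f of total degree at most 3: (1/4)∫_{[−1,1]²} f(x,y) dx dy = ω̄·Σ_{μ=1}^Q ω_μ [ (λ₁/λ)(f(−1, x^μ) + f(1, x^μ)) + (λ₂/λ)(f(x^μ, −1) + f(x^μ, 1)) ] + ω̃·(f(P₁) + f(P₂)). -/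

import Mathlib

open scoped BigOperators

noncomputable section

/-- Evaluation of a bivariate polynomial at the point `(a, b)`. -/
def eval2 (f : MvPolynomial (Fin 2) ℝ) (a b : ℝ) : ℝ := MvPolynomial.eval ![a, b] f

lemma monoA (r1 r2 a s : ℝ) (ha0 : 0 ≤ a) (hr : r1 + r2 = 1) (hd : r1 - r2 = -a)
    (hs : s ^ 2 * (3 + 3 * a) = 2 * a) (S M : ℕ → ℝ)
    (hS0 : S 0 = 1) (hS1 : S 1 = 0) (hS2 : S 2 = 1/3) (hS3 : S 3 = 0)
    (hM0 : M 0 = 2) (hM1 : M 1 = 0) (hM2 : M 2 = 2/3) (hM3 : M 3 = 0)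
    (i j : ℕ) (hij : i + j ≤ 3) :
    (1 / 4) * (M i * M j)
      = (1 / (4 + 2 * a)) * (r1 * ((-1)^i + 1) * S j + r2 * ((-1)^j + 1) * S i)
        + ((1 + a) / (2 * (2 + a))) * (s ^ i * (0:ℝ) ^ j + (-s) ^ i * (0:ℝ) ^ j) := by
  have hi3 : i ≤ 3 := le_trans (Nat.le_add_right _ _) hij
  have hj3 : j ≤ 3 := le_trans (Nat.le_add_left _ _) hij
  have h4 : (0:ℝ) < 4 + 2 * a := by linarith
  have h2 : (0:ℝ) < 2 * (2 + a) := by linarith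
  have h3 : (0:ℝ) < 3 + 3 * a := by linarith
  have keya : s ^ 2 * (3 + 3 * a) * a = 2 * a * a := by rw [hs]
  interval_cases i <;> interval_cases j <;>
    first
      | (exfalso; omega)
      | (simp only [hS0, hS1, hS2, hS3, hM0, hM1, hM2, hM3]; norm_num;
         field_simp; nlinarith [hs, keya])
      | (simp only [hS0, hS1, hS2, hS3, hM0, hM1, hM2, hM3]; norm_num; done)
      | (simp only [hS0, hS1, hS2, hS3, hM0, hM1, hM2, hM3]; ring_nf; norm_num; done)
      | (simp only [hS0, hS1, hS2, hS3, hM0, hM1, hM2, hM3]; norm_num;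
         exact Or.inr (by ring))

/-- **2D Cui–Ding–Wu cell average decomposition for degree ≤ 3.** -/
theorem cuiDingWu_CAD (x w : Fin 4 → ℝ)
    (hxmem : ∀ μ, x μ ∈ Set.Icc (-1 : ℝ) 1)
    (hwsum : ∑ μ, w μ = 1)
    (hGaussExact : ∀ p : Polynomial ℝ, p.natDegree ≤ 7 →
      ∑ μ, w μ * p.eval (x μ) = (1 / 2) * ∫ t in (-1 : ℝ)..1, p.eval t)
    (lam1 lam2 : ℝ) (h1 : 0 ≤ lam1) (h2 : 0 ≤ lam2) (hpos : 0 < lam1 + lam2) :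
    ∀ f : MvPolynomial (Fin 2) ℝ, f.totalDegree ≤ 3 →
      let δ : ℝ := (lam1 - lam2) / (lam1 + lam2)
      let s : ℝ := Real.sqrt (2 * |δ| / (3 + 3 * |δ|))
      let P1 : ℝ × ℝ := if δ ≤ 0 then (s, 0) else (0, s)
      let P2 : ℝ × ℝ := if δ ≤ 0 then (-s, 0) else (0, -s)
      (1 / 4) * ∫ a in (-1 : ℝ)..1, ∫ b in (-1 : ℝ)..1, eval2 f a b
        = (1 / (4 + 2 * |δ|)) * ∑ μ, w μ *
            ((lam1 / (lam1 + lam2)) * (eval2 f (-1) (x μ) + eval2 f 1 (x μ))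
              + (lam2 / (lam1 + lam2)) * (eval2 f (x μ) (-1) + eval2 f (x μ) 1))
          + ((1 + |δ|) / (2 * (2 + |δ|))) * (eval2 f P1.1 P1.2 + eval2 f P2.1 P2.2) := by
  intro f hf δ s P1 P2
  have hδdef : δ = (lam1 - lam2) / (lam1 + lam2) := rfl
  have hsdef : s = Real.sqrt (2 * |δ| / (3 + 3 * |δ|)) := rfl
  have hP1 : P1 = if δ ≤ 0 then ((s, 0) : ℝ × ℝ) else (0, s) := rfl
  have hP2 : P2 = if δ ≤ 0 then ((-s, 0) : ℝ × ℝ) else (0, -s) := rfl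
  clear_value δ s P1 P2
  -- evaluation as a sum over the support
  have heval : ∀ a b : ℝ, eval2 f a b = ∑ d ∈ f.support, f.coeff d * (a ^ d 0 * b ^ d 1) := by
    intro a b
    rw [eval2, MvPolynomial.eval_eq']
    refine Finset.sum_congr rfl fun d _ => ?_
    rw [Fin.prod_univ_two]
    simp
  -- moments
  set M : ℕ → ℝ := fun k => ∫ t in (-1:ℝ)..1, t ^ k with hMdef
  have hM : ∀ k : ℕ, M k = (1 ^ (k+1) - (-1:ℝ) ^ (k+1)) / (k+1) := fun k => integral_pow k
  have hM0 : M 0 = 2 := by rw [hM]; norm_num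
  have hM1 : M 1 = 0 := by rw [hM]; norm_num
  have hM2 : M 2 = 2/3 := by rw [hM]; norm_num
  have hM3 : M 3 = 0 := by rw [hM]; norm_num
  -- Gauss sums
  set S : ℕ → ℝ := fun k => ∑ μ, w μ * x μ ^ k with hSdef
  have hS : ∀ k : ℕ, k ≤ 7 → S k = (1/2) * ((1 ^ (k+1) - (-1:ℝ) ^ (k+1)) / (k+1)) := by
    intro k hk
    have h := hGaussExact (Polynomial.X ^ k) (by simp [hk])
    simp only [Polynomial.eval_pow, Polynomial.eval_X] at h
    rw [hSdef]
    simp only [h, integral_pow]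
  have hS0 : S 0 = 1 := by rw [hS 0 (by norm_num)]; norm_num
  have hS1 : S 1 = 0 := by rw [hS 1 (by norm_num)]; norm_num
  have hS2 : S 2 = 1/3 := by rw [hS 2 (by norm_num)]; norm_num
  have hS3 : S 3 = 0 := by rw [hS 3 (by norm_num)]; norm_num
  -- double integral reduction
  have hinner : ∀ a : ℝ, (∫ b in (-1:ℝ)..1, eval2 f a b)
      = ∑ d ∈ f.support, f.coeff d * (a ^ d 0 * M (d 1)) := by
    intro a
    simp_rw [heval]
    rw [intervalIntegral.integral_finset_sum (fun d _ =>
      (show Continuous fun b : ℝ => f.coeff d * (a ^ d 0 * b ^ d 1) from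
        continuous_const.mul (continuous_const.mul (continuous_pow _))).intervalIntegrable _ _)]
    refine Finset.sum_congr rfl fun d _ => ?_
    rw [intervalIntegral.integral_const_mul, intervalIntegral.integral_const_mul]
  have hI : (∫ a in (-1:ℝ)..1, ∫ b in (-1:ℝ)..1, eval2 f a b)
      = ∑ d ∈ f.support, f.coeff d * (M (d 0) * M (d 1)) := by
    simp_rw [hinner]
    rw [intervalIntegral.integral_finset_sum (fun d _ =>
      (show Continuous fun a : ℝ => f.coeff d * (a ^ d 0 * M (d 1)) from
        continuous_const.mul ((continuous_pow _).mul continuous_const)).intervalIntegrable _ _)]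
    refine Finset.sum_congr rfl fun d _ => ?_
    rw [intervalIntegral.integral_const_mul, intervalIntegral.integral_mul_const]
  -- boundary quadrature sum reduction
  have hSum : (∑ μ, w μ *
        ((lam1 / (lam1 + lam2)) * (eval2 f (-1) (x μ) + eval2 f 1 (x μ))
          + (lam2 / (lam1 + lam2)) * (eval2 f (x μ) (-1) + eval2 f (x μ) 1)))
      = ∑ d ∈ f.support, f.coeff d *
          ((lam1 / (lam1 + lam2)) * ((-1)^(d 0) + 1) * S (d 1)
            + (lam2 / (lam1 + lam2)) * ((-1)^(d 1) + 1) * S (d 0)) := by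
    have step : ∀ μ : Fin 4, w μ *
        ((lam1 / (lam1 + lam2)) * (eval2 f (-1) (x μ) + eval2 f 1 (x μ))
          + (lam2 / (lam1 + lam2)) * (eval2 f (x μ) (-1) + eval2 f (x μ) 1))
        = ∑ d ∈ f.support, (f.coeff d * ((lam1 / (lam1 + lam2)) * ((-1)^(d 0) + 1)) * (w μ * x μ ^ d 1)
            + f.coeff d * ((lam2 / (lam1 + lam2)) * ((-1)^(d 1) + 1)) * (w μ * x μ ^ d 0)) := by
      intro μ
      rw [heval, heval, heval, heval]
      rw [← Finset.sum_add_distrib, ← Finset.sum_add_distrib, Finset.mul_sum, Finset.mul_sum,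
        ← Finset.sum_add_distrib, Finset.mul_sum]
      refine Finset.sum_congr rfl fun d _ => ?_
      ring
    simp_rw [step]
    rw [Finset.sum_comm]
    refine Finset.sum_congr rfl fun d _ => ?_
    rw [Finset.sum_add_distrib, ← Finset.mul_sum, ← Finset.mul_sum]
    rw [hSdef]
    ring
  rw [hI, hSum, heval, heval, ← Finset.sum_add_distrib, Finset.mul_sum, Finset.mul_sum,
    Finset.mul_sum, ← Finset.sum_add_distrib]
  refine Finset.sum_congr rfl fun d hd => ?_
  have hij : d 0 + d 1 ≤ 3 := by
    have h := MvPolynomial.le_totalDegree hd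
    rw [Finsupp.sum_fintype _ _ (fun _ => rfl), Fin.sum_univ_two] at h
    omega
  have hl : lam1 / (lam1 + lam2) + lam2 / (lam1 + lam2) = 1 := by
    field_simp
  have hδeq : lam1 / (lam1 + lam2) - lam2 / (lam1 + lam2) = δ := by
    rw [hδdef]; field_simp
  have habs : 0 ≤ 2 * |δ| / (3 + 3 * |δ|) := by
    have := abs_nonneg δ
    positivity
  have hs2 : s ^ 2 * (3 + 3 * |δ|) = 2 * |δ| := by
    rw [hsdef, Real.sq_sqrt habs]
    have h3 : (3:ℝ) + 3 * |δ| ≠ 0 := by have := abs_nonneg δ; positivity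
    field_simp
  rcases le_or_gt δ 0 with hδ | hδ
  · rw [hP1, hP2, if_pos hδ, if_pos hδ]
    have ha : |δ| = -δ := abs_of_nonpos hδ
    have key := monoA (lam1 / (lam1 + lam2)) (lam2 / (lam1 + lam2)) (|δ|) s (abs_nonneg δ)
      hl (by rw [hδeq, ha, neg_neg]) hs2 S M hS0 hS1 hS2 hS3 hM0 hM1 hM2 hM3 (d 0) (d 1) hij
    dsimp only
    linear_combination (f.coeff d) * key
  · rw [hP1, hP2, if_neg (not_le.mpr hδ), if_neg (not_le.mpr hδ)]
    have ha : |δ| = δ := abs_of_pos hδ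
    have key := monoA (lam2 / (lam1 + lam2)) (lam1 / (lam1 + lam2)) (|δ|) s (abs_nonneg δ)
      (by linarith) (by rw [ha]; linarith [hδeq]) hs2 S M hS0 hS1 hS2 hS3 hM0 hM1 hM2 hM3
      (d 1) (d 0) (by omega)
    dsimp only
    linear_combination (f.coeff d) * key
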